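/- Let a ≥ 1 and n ≥ ℓ ≥ 1 be integers, let α be a real number with α < 1/2, and let t ≥ 0 be an integer with t < α·ℓ·a. Then Θ_{t,n,ℓ}(a,…,a) < exp(−2(1/2−α)²·ℓ), where all n boxes contain a balls. -/

import Mathlib

open MeasureTheory ProbabilityTheory
open scoped ENNReal

/-- `theta t as ℓ`: the maximal probability, over all adaptive drawing strategies,
of drawing `ℓ` red balls within `t` draws, where the boxes contain `as` balls
(each box containing exactly one red ball), defined by the dynamic-programming
recursion of the red ball experiment. A box reduced to `0` balls is discarded. -/
noncomputable def theta : ℕ → List ℕ → ℕ → ℝ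
  | _, _, 0 => 1
  | 0, _, _ + 1 => 0
  | t + 1, as, l + 1 =>
    if h : l + 1 ≤ as.length then
      (Finset.range as.length).sup'
        (Finset.nonempty_range_iff.mpr (by omega)) (fun j =>
          ((as.getD j 1 : ℝ))⁻¹ * theta t (as.eraseIdx j) l
            + (1 - ((as.getD j 1 : ℝ))⁻¹) *
                theta t
                  (if as.getD j 1 ≤ 1 then as.eraseIdx j
                   else as.set j (as.getD j 1 - 1)) (l + 1))
    else 0


noncomputable def Ssum (lam : ℝ) (c : ℕ) : ℝ := ∑ u ∈ Finset.Icc 1 c, Real.exp (-lam * u)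

noncomputable def phi (lam : ℝ) (c : ℕ) : ℝ := Ssum lam c / c

lemma Ssum_zero (lam : ℝ) : Ssum lam 0 = 0 := by simp [Ssum]

lemma Ssum_succ (lam : ℝ) (c : ℕ) :
    Ssum lam (c + 1) = Ssum lam c + Real.exp (-lam * (c + 1)) := by
  unfold Ssum
  rw [Finset.sum_Icc_succ_top (by omega)]
  push_cast
  ring

lemma Ssum_nonneg (lam : ℝ) (c : ℕ) : 0 ≤ Ssum lam c :=
  Finset.sum_nonneg fun _ _ => (Real.exp_pos _).le

lemma Ssum_le (lam : ℝ) (hlam : 0 ≤ lam) (c : ℕ) : Ssum lam c ≤ c := by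
  calc Ssum lam c ≤ ∑ u ∈ Finset.Icc 1 c, (1 : ℝ) := by
        apply Finset.sum_le_sum
        intro u hu
        rw [Real.exp_le_one_iff]
        have hu1 : (1 : ℝ) ≤ u := by
          have := (Finset.mem_Icc.mp hu).1; exact_mod_cast this
        nlinarith
    _ = c := by simp

lemma phi_nonneg (lam : ℝ) (c : ℕ) : 0 ≤ phi lam c :=
  div_nonneg (Ssum_nonneg lam c) (by positivity)

lemma phi_le_one (lam : ℝ) (hlam : 0 ≤ lam) (c : ℕ) : phi lam c ≤ 1 := by
  rcases Nat.eq_zero_or_pos c with h | h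
  · simp [phi, h, Ssum_zero]
  · rw [phi, div_le_one (by exact_mod_cast h)]
    exact Ssum_le lam hlam c

lemma exp_mul_Ssum (lam : ℝ) {k : ℕ} (hk : 1 ≤ k) :
    Real.exp lam * Ssum lam k = 1 + Ssum lam (k - 1) := by
  induction k with
  | zero => omega
  | succ m ih =>
    rcases Nat.eq_zero_or_pos m with hm | hm
    · subst hm
      simp [Ssum_succ, Ssum_zero, ← Real.exp_add]
    · have ihm := ih hm
      have hm1 : m - 1 + 1 = m := by omega
      rw [Ssum_succ, Nat.add_sub_cancel, mul_add, ihm, ← Real.exp_add]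
      have : Ssum lam m = Ssum lam (m - 1) + Real.exp (-lam * m) := by
        conv_lhs => rw [← hm1, Ssum_succ]
        congr 2
        push_cast [hm1]
        have : (1:ℝ) ≤ (m:ℝ) := by exact_mod_cast hm
        push_cast
        have hm1' : ((m - 1 : ℕ):ℝ) = (m:ℝ) - 1 := by
          have : (1:ℕ) ≤ m := hm
          push_cast [this]
          ring
        rw [hm1']
        ring
      rw [this]
      have : lam + -lam * (↑m + 1) = -lam * m := by push_cast; ring
      rw [this]
      ring

lemma exp_mul_phi (lam : ℝ) {k : ℕ} (hk : 1 ≤ k) :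
    Real.exp lam * phi lam k = (k : ℝ)⁻¹ + (1 - (k : ℝ)⁻¹) * phi lam (k - 1) := by
  have hk0 : (0 : ℝ) < k := by exact_mod_cast hk
  rcases Nat.eq_or_lt_of_le hk with h1 | h2
  · subst h1
    simp [phi, Ssum_zero, Ssum_succ]
    rw [← Real.exp_add]
    norm_num
  · have hk1 : (1:ℕ) ≤ k - 1 := by omega
    have hk10 : (0 : ℝ) < (k - 1 : ℕ) := by exact_mod_cast hk1
    have hcast : ((k - 1 : ℕ) : ℝ) = (k : ℝ) - 1 := by
      have : (1:ℕ) ≤ k := hk; push_cast [this]; ring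
    rw [phi, phi]
    rw [show Real.exp lam * (Ssum lam k / (k:ℝ)) = (Real.exp lam * Ssum lam k) / k by ring,
      exp_mul_Ssum lam hk]
    rw [hcast]
    have hne : (k:ℝ) - 1 ≠ 0 := by nlinarith
    have h1 : (1 - (k:ℝ)⁻¹) * (Ssum lam (k-1) / ((k:ℝ)-1)) = Ssum lam (k-1) / k := by
      field_simp
    rw [h1]
    field_simp

lemma phi_anti (lam : ℝ) (hlam : 0 ≤ lam) {c c' : ℕ} (hc : 1 ≤ c) (hcc : c ≤ c') :
    phi lam c' ≤ phi lam c := by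
  have hc0 : (0 : ℝ) < c := by exact_mod_cast hc
  have hc'0 : (0 : ℝ) < c' := by have : 1 ≤ c' := le_trans hc hcc; exact_mod_cast this
  rw [phi, phi, div_le_div_iff₀ hc'0 hc0]
  -- key : (c:ℝ) * Ssum lam c' ≤ (c':ℝ) * Ssum lam c
  have hIcc : ∀ m : ℕ, Finset.Icc 1 m = Finset.Ioc 0 m := fun m => by
    rw [← Finset.Icc_add_one_left_eq_Ioc, zero_add]
  have hsplit : Ssum lam c' = Ssum lam c + ∑ u ∈ Finset.Ioc c c', Real.exp (-lam * u) := by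
    unfold Ssum
    rw [hIcc, hIcc, Finset.sum_Ioc_consecutive _ (Nat.zero_le c) hcc]
  have hterm : ∀ u ∈ Finset.Ioc c c', (c : ℝ) * Real.exp (-lam * u) ≤ Ssum lam c := by
    intro u hu
    have hcu : c < u := (Finset.mem_Ioc.mp hu).1
    have : (Finset.Icc 1 c).card • Real.exp (-lam * u) ≤ Ssum lam c := by
      apply Finset.card_nsmul_le_sum
      intro v hv
      apply Real.exp_le_exp.mpr
      have hv' : (v:ℝ) ≤ u := by
        have := (Finset.mem_Icc.mp hv).2
        have : v ≤ u := by omega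
        exact_mod_cast this
      nlinarith
    simpa [Nat.card_Icc, nsmul_eq_mul] using this
  have hsum : ∑ u ∈ Finset.Ioc c c', (c : ℝ) * Real.exp (-lam * u)
      ≤ ∑ u ∈ Finset.Ioc c c', Ssum lam c := Finset.sum_le_sum hterm
  have hcard : ((Finset.Ioc c c').card : ℝ) = (c' : ℝ) - c := by
    rw [Nat.card_Ioc]; push_cast [hcc]; ring
  rw [Finset.sum_const, nsmul_eq_mul, hcard] at hsum
  rw [← Finset.mul_sum] at hsum
  nlinarith [hsplit, Ssum_nonneg lam c]


noncomputable def listpp (lam : ℝ) (l : List ℕ) : ℝ := (l.map (phi lam)).prod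

/-- the potential: product of `phi` over the `l` smallest elements -/
noncomputable def pot (lam : ℝ) (l : ℕ) (M : Multiset ℕ) : ℝ :=
  listpp lam ((M.sort (· ≤ ·)).take l)

lemma sort_cons_eq (x : ℕ) (E : Multiset ℕ) :
    (x ::ₘ E).sort (· ≤ ·) = (E.sort (· ≤ ·)).orderedInsert (· ≤ ·) x := by
  refine List.Perm.eq_of_pairwise' (Multiset.pairwise_sort _ _)
    (List.Pairwise.orderedInsert x _ (Multiset.pairwise_sort _ _)) ?_
  rw [← Multiset.coe_eq_coe, Multiset.sort_eq]
  have h1 := List.perm_orderedInsert (α := ℕ) (· ≤ ·) x (E.sort (· ≤ ·))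
  rw [Multiset.coe_eq_coe.mpr h1]
  rw [← Multiset.cons_coe, Multiset.sort_eq]

-- the insertion point is ≤ l when x is at most the l-th element (or l = length)
lemma takeWhile_length_le {s : List ℕ} {x l : ℕ} (hl : l ≤ s.length)
    (hx : ∀ h : l < s.length, x ≤ s[l]) :
    (s.takeWhile fun b => decide ¬x ≤ b).length ≤ l := by
  by_contra hcon
  have hcon' := Nat.lt_of_not_le hcon
  have hl' : l < s.length := by
    have := (List.takeWhile_prefix (l := s) (fun b => decide ¬x ≤ b)).length_le
    omega
  set t := s.takeWhile fun b => decide ¬x ≤ b with ht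
  have hlt : l < t.length := hcon'
  have hmem : t[l] ∈ t := List.getElem_mem _
  have hpred := List.mem_takeWhile_imp hmem
  have hts : t[l] = s[l] := (List.takeWhile_prefix _).getElem hlt
  simp only [decide_eq_true_eq] at hpred
  exact hpred (hts ▸ hx hl')

/-- Lemma A : product over take (l+1) of insertion = phi x * product over take l -/
lemma listpp_take_orderedInsert_low (lam : ℝ) {s : List ℕ} {x l : ℕ}
    (hp : (s.takeWhile fun b => decide ¬x ≤ b).length ≤ l) :
    listpp lam ((s.orderedInsert (· ≤ ·) x).take (l + 1))
      = phi lam x * listpp lam (s.take l) := by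
  rw [List.orderedInsert_eq_take_drop]
  set t1 := s.takeWhile fun b => decide ¬x ≤ b with ht1
  set t2 := s.dropWhile fun b => decide ¬x ≤ b with ht2
  set p := t1.length with hp'
  rw [List.take_append]
  rw [List.take_of_length_le (by omega : t1.length ≤ l + 1)]
  have h1 : l + 1 - p = (l - p) + 1 := by omega
  rw [h1, List.take_succ_cons]
  conv_rhs => rw [← List.takeWhile_append_dropWhile (p := fun b => decide ¬x ≤ b) (l := s)]
  rw [List.take_append, List.take_of_length_le (by omega : t1.length ≤ l)]
  unfold listpp
  rw [List.map_append, List.prod_append, List.map_cons, List.prod_cons,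
    List.map_append, List.prod_append]
  ring

lemma take_split_high {x l : ℕ} {s t1 t2 : List ℕ} (hst : s = t1 ++ t2)
    (hs : s.Pairwise (· ≤ ·))
    (hhead : ∀ _ : 0 < t2.length, x ≤ t2[0])
    (hl : l < s.length) (hx : s[l] ≤ x) :
    (t1 ++ x :: t2).take (l + 1) = s.take (l + 1) := by
  subst hst
  have hlen : (t1 ++ t2).length = t1.length + t2.length := List.length_append
  set p := t1.length with hp
  rcases le_or_gt p l with hpl | hlp
  · have hsort2 : t2.Pairwise (· ≤ ·) :=
      List.Pairwise.sublist (List.sublist_append_right t1 t2) hs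
    have helem : ∀ i (hi : i < t2.length), p + i ≤ l → t2[i] = x := by
      intro i hi hpil
      have hpi : p + i < (t1 ++ t2).length := by omega
      have hidx : (t1 ++ t2)[p + i]'hpi = t2[i] := by
        rw [List.getElem_append_right (by omega)]
        congr 1
        omega
      have h0t : 0 < t2.length := by omega
      have hxle : x ≤ t2[0]'h0t := hhead h0t
      have h1 : t2[0]'h0t ≤ t2[i] :=
        List.Pairwise.rel_get_of_le hsort2 (a := ⟨0, h0t⟩) (b := ⟨i, hi⟩)
          (Fin.mk_le_mk.mpr (Nat.zero_le i))
      have h2 : (t1 ++ t2)[p + i]'hpi ≤ (t1 ++ t2)[l]'hl :=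
        List.Pairwise.rel_get_of_le hs (a := ⟨p + i, hpi⟩) (b := ⟨l, hl⟩)
          (Fin.mk_le_mk.mpr hpil)
      rw [hidx] at h2
      omega
    have hll : l + 1 - p ≤ t2.length := by omega
    have hrep1 : t2.take (l + 1 - p) = List.replicate (l + 1 - p) x := by
      rw [List.eq_replicate_iff]
      constructor
      · rw [List.length_take]; omega
      · intro b hb
        obtain ⟨i, hi, rfl⟩ := List.mem_iff_getElem.mp hb
        rw [List.getElem_take]
        have hi' : i < l + 1 - p := by
          have := hi; rw [List.length_take] at this; omega
        exact helem i (by omega) (by omega)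
    have hrep2 : t2.take (l - p) = List.replicate (l - p) x := by
      have h : t2.take (l - p) = (t2.take (l + 1 - p)).take (l - p) := by
        rw [List.take_take]; congr 1; omega
      rw [h, hrep1, List.take_replicate]
      congr 1; omega
    rw [List.take_append, List.take_of_length_le (by omega : t1.length ≤ l + 1)]
    rw [List.take_append, List.take_of_length_le (by omega : t1.length ≤ l + 1)]
    congr 1
    rw [show l + 1 - p = (l - p) + 1 by omega, List.take_succ_cons, hrep2,
      show l - p + 1 = l + 1 - p by omega, hrep1, show l + 1 - p = l - p + 1 from Nat.sub_add_comm hpl,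
      List.replicate_succ]
  · rw [List.take_append, show l + 1 - p = 0 by omega, List.take_zero,
      List.append_nil]
    rw [List.take_append, show l + 1 - p = 0 by omega, List.take_zero,
      List.append_nil]

/-- Lemma B : if s[l] ≤ x then take (l+1) of the insertion equals take (l+1) of s -/
lemma take_orderedInsert_high {s : List ℕ} (hs : s.Pairwise (· ≤ ·)) {x l : ℕ}
    (hl : l < s.length) (hx : s[l] ≤ x) :
    (s.orderedInsert (· ≤ ·) x).take (l + 1) = s.take (l + 1) := by
  rw [List.orderedInsert_eq_take_drop]
  have hhead : ∀ _ : 0 < (s.dropWhile fun b => decide ¬x ≤ b).length,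
      x ≤ (s.dropWhile fun b => decide ¬x ≤ b)[0] := by
    intro h0
    have := List.dropWhile_get_zero_not (fun b => decide ¬x ≤ b) s h0
    simp only [List.get_eq_getElem, decide_eq_true_eq, not_not] at this
    omega
  exact take_split_high List.takeWhile_append_dropWhile.symm hs hhead hl hx

lemma listpp_nonneg (lam : ℝ) (l : List ℕ) : 0 ≤ listpp lam l :=
  List.prod_nonneg (by
    intro a ha
    obtain ⟨y, _, rfl⟩ := List.mem_map.mp ha
    exact phi_nonneg lam y)

lemma pot_nonneg (lam : ℝ) (l : ℕ) (M : Multiset ℕ) : 0 ≤ pot lam l M :=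
  listpp_nonneg _ _

lemma key (lam : ℝ) (hlam : 0 ≤ lam) {E : Multiset ℕ} (hE : ∀ y ∈ E, 1 ≤ y) {k l : ℕ}
    (hk : 1 ≤ k) (hl : l ≤ Multiset.card E) :
    (k : ℝ)⁻¹ * pot lam l E + (1 - (k : ℝ)⁻¹) * pot lam (l + 1) ((k - 1) ::ₘ E)
      ≤ Real.exp lam * pot lam (l + 1) (k ::ₘ E) := by
  have hk0 : (0 : ℝ) < k := by exact_mod_cast hk
  set s := E.sort (· ≤ ·) with hs
  have hslen : s.length = Multiset.card E := Multiset.length_sort _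
  have hsorted : s.Pairwise (· ≤ ·) := Multiset.pairwise_sort _ _
  have hP : 0 ≤ listpp lam (s.take l) := listpp_nonneg _ _
  have hpotE : pot lam l E = listpp lam (s.take l) := rfl
  by_cases hcase : ∀ h : l < s.length, k ≤ s[l]
  · -- aligned case : equality
    have hpk : pot lam (l + 1) (k ::ₘ E) = phi lam k * listpp lam (s.take l) := by
      rw [pot, sort_cons_eq, ← hs]
      exact listpp_take_orderedInsert_low lam
        (takeWhile_length_le (by omega) hcase)
    have hpk1 : pot lam (l + 1) ((k - 1) ::ₘ E) = phi lam (k - 1) * listpp lam (s.take l) := by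
      rw [pot, sort_cons_eq, ← hs]
      refine listpp_take_orderedInsert_low lam (takeWhile_length_le (by omega) ?_)
      intro h
      exact le_trans (by omega) (hcase h)
    have hexp : Real.exp lam * (phi lam k * listpp lam (s.take l))
        = ((k : ℝ)⁻¹ + (1 - (k : ℝ)⁻¹) * phi lam (k - 1)) * listpp lam (s.take l) := by
      rw [← mul_assoc, exp_mul_phi lam hk]
    rw [hpotE, hpk, hpk1, hexp]
    ring_nf
    exact le_refl _
  · push_neg at hcase
    obtain ⟨hls, hslk⟩ := hcase
    set c := s[l] with hc
    have hck : c ≤ k := le_of_lt hslk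
    have hcE : c ∈ E := by
      rw [← Multiset.mem_sort (· ≤ ·), ← hs]
      exact List.getElem_mem hls
    have hc1 : 1 ≤ c := hE c hcE
    have hc0 : (0 : ℝ) < c := by exact_mod_cast hc1
    -- right hand side : pot (l+1) (k ::ₘ E) = phi c * P
    have htake : s.take (l + 1) = s.take l ++ [c] := (List.take_concat_get' s l hls).symm
    have hPsucc : listpp lam (s.take (l + 1)) = phi lam c * listpp lam (s.take l) := by
      rw [htake]
      unfold listpp
      rw [List.map_append, List.prod_append]
      simp [mul_comm]
    have hrhs : pot lam (l + 1) (k ::ₘ E) = phi lam c * listpp lam (s.take l) := by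
      rw [pot, sort_cons_eq, ← hs, take_orderedInsert_high hsorted hls hck, hPsucc]
    -- the second term : X * P with X = phi (k-1) or phi c
    obtain ⟨X, hXeq, hX0, hX1, hXle⟩ :
        ∃ X : ℝ, pot lam (l + 1) ((k - 1) ::ₘ E) = X * listpp lam (s.take l)
          ∧ 0 ≤ X ∧ X ≤ 1 ∧ (2 ≤ c → X ≤ phi lam (c - 1)) := by
      rcases le_or_gt (k - 1) c with hkc | hck1
      · refine ⟨phi lam (k - 1), ?_, phi_nonneg _ _, phi_le_one _ hlam _, ?_⟩
        · rw [pot, sort_cons_eq, ← hs]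
          refine listpp_take_orderedInsert_low lam (takeWhile_length_le (by omega) ?_)
          intro h
          exact hkc
        · intro hc2
          exact phi_anti lam hlam (by omega) (by omega)
      · refine ⟨phi lam c, ?_, phi_nonneg _ _, phi_le_one _ hlam _, ?_⟩
        · rw [pot, sort_cons_eq, ← hs, take_orderedInsert_high hsorted hls (by omega), hPsucc]
        · intro hc2
          exact phi_anti lam hlam (by omega) (by omega)
    -- arithmetic
    have harr : (k : ℝ)⁻¹ + (1 - (k : ℝ)⁻¹) * X ≤ Real.exp lam * phi lam c := by
      rw [exp_mul_phi lam hc1]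
      have hkinv : (k : ℝ)⁻¹ ≤ (c : ℝ)⁻¹ := by
        apply inv_anti₀ hc0
        exact_mod_cast hck
      have hkinv1 : (k : ℝ)⁻¹ ≤ 1 := by
        rw [inv_le_one_iff₀]
        right
        exact_mod_cast hk
      have hkinv0 : 0 < (k : ℝ)⁻¹ := by positivity
      rcases Nat.lt_or_ge c 2 with hc2 | hc2
      · have hceq : c = 1 := by omega
        rw [hceq]
        norm_num
        nlinarith
      · have hXc := hXle hc2
        have hphi1 : phi lam (c - 1) ≤ 1 := phi_le_one _ hlam _
        have hcinv1 : (c : ℝ)⁻¹ ≤ 1 := by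
          rw [inv_le_one_iff₀]
          right
          exact_mod_cast hc1
        nlinarith
    rw [hpotE, hrhs, hXeq]
    calc (k : ℝ)⁻¹ * listpp lam (s.take l) + (1 - (k : ℝ)⁻¹) * (X * listpp lam (s.take l))
        = ((k : ℝ)⁻¹ + (1 - (k : ℝ)⁻¹) * X) * listpp lam (s.take l) := by ring
      _ ≤ (Real.exp lam * phi lam c) * listpp lam (s.take l) :=
          mul_le_mul_of_nonneg_right harr hP
      _ = Real.exp lam * (phi lam c * listpp lam (s.take l)) := by ring

lemma coe_cons_eraseIdx {as : List ℕ} {j : ℕ} (hj : j < as.length) :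
    (↑as : Multiset ℕ) = as[j] ::ₘ ↑(as.eraseIdx j) := by
  rw [List.eraseIdx_eq_take_drop_succ, Multiset.cons_coe, Multiset.coe_eq_coe]
  have h1 : as = as.take j ++ as[j] :: as.drop (j + 1) := by
    conv_lhs => rw [← List.take_append_drop j as, ← List.getElem_cons_drop hj]
  nth_rewrite 1 [h1]
  exact List.perm_middle

lemma coe_set {as : List ℕ} {j v : ℕ} (hj : j < as.length) :
    (↑(as.set j v) : Multiset ℕ) = v ::ₘ ↑(as.eraseIdx j) := by
  rw [List.set_eq_take_cons_drop v hj, List.eraseIdx_eq_take_drop_succ,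
    Multiset.cons_coe, Multiset.coe_eq_coe]
  exact List.perm_middle

lemma inv_nat_nonneg (k : ℕ) : (0:ℝ) ≤ ((k:ℝ))⁻¹ := by positivity

lemma one_sub_inv_nat_nonneg (k : ℕ) : (0:ℝ) ≤ 1 - ((k:ℝ))⁻¹ := by
  rcases Nat.eq_zero_or_pos k with h | h
  · simp [h]
  · have : (1:ℝ) ≤ k := by exact_mod_cast h
    have : ((k:ℝ))⁻¹ ≤ 1 := by
      rw [inv_le_one_iff₀]; right; exact this
    linarith

lemma theta_nonneg : ∀ (t : ℕ) (as : List ℕ) (l : ℕ), 0 ≤ theta t as l := by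
  intro t
  induction t with
  | zero =>
    intro as l
    match l with
    | 0 => rw [theta]; norm_num
    | l + 1 => rw [theta]
  | succ t ih =>
    intro as l
    match l with
    | 0 => rw [theta]; norm_num
    | l + 1 =>
      by_cases h : l + 1 ≤ as.length
      · rw [theta, dif_pos h]
        have h0 : 0 ∈ Finset.range as.length := by
          rw [Finset.mem_range]; omega
        refine le_trans ?_ (Finset.le_sup' _ h0)
        have := ih (as.eraseIdx 0) l
        have := ih (if as.getD 0 1 ≤ 1 then as.eraseIdx 0 else as.set 0 (as.getD 0 1 - 1)) (l+1)
        have := inv_nat_nonneg (as.getD 0 1)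
        have := one_sub_inv_nat_nonneg (as.getD 0 1)
        positivity
      · rw [theta, dif_neg h]

lemma theta_le_pot (lam : ℝ) (hlam : 0 ≤ lam) :
    ∀ (t : ℕ) (as : List ℕ) (l : ℕ), (∀ y ∈ as, 1 ≤ y) →
      theta t as l ≤ Real.exp (lam * t) * pot lam l ↑as := by
  intro t
  induction t with
  | zero =>
    intro as l hy
    match l with
    | 0 =>
      rw [theta]
      simp [pot, listpp]
    | l + 1 =>
      rw [theta]
      exact mul_nonneg (Real.exp_pos _).le (pot_nonneg _ _ _)
  | succ t ih =>
    intro as l hy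
    match l with
    | 0 =>
      rw [theta]
      have h1 : pot lam 0 (↑as) = 1 := by simp [pot, listpp]
      rw [h1, mul_one]
      rw [Real.one_le_exp_iff]  -- maybe named differently
      positivity
    | l + 1 =>
      by_cases h : l + 1 ≤ as.length
      · rw [theta, dif_pos h]
        apply Finset.sup'_le
        intro j hj
        rw [Finset.mem_range] at hj
        set k := as.getD j 1 with hkdef
        have hkj : k = as[j] := List.getD_eq_getElem as 1 hj
        have hkas : k ∈ as := by rw [hkj]; exact List.getElem_mem hj
        have hk1 : 1 ≤ k := hy k hkas
        have hEy : ∀ y ∈ as.eraseIdx j, 1 ≤ y := fun y hyy =>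
          hy y (List.Sublist.mem hyy (List.eraseIdx_sublist as j))
        have hcard : Multiset.card (↑(as.eraseIdx j) : Multiset ℕ) = as.length - 1 := by
          rw [Multiset.coe_card, List.length_eraseIdx, if_pos hj]
        have hcoe : (↑as : Multiset ℕ) = k ::ₘ ↑(as.eraseIdx j) := by
          rw [hkj]; exact coe_cons_eraseIdx hj
        have hl : l ≤ Multiset.card (↑(as.eraseIdx j) : Multiset ℕ) := by
          rw [hcard]; omega
        have ht1 := ih (as.eraseIdx j) l hEy
        have hkey := key lam hlam hEy hk1 hl
        have hinv0 := inv_nat_nonneg k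
        have hinv1 := one_sub_inv_nat_nonneg k
        have hexpt : Real.exp (lam * ↑(t+1)) = Real.exp (lam * t) * Real.exp lam := by
          rw [← Real.exp_add]
          congr 1
          push_cast
          ring
        by_cases hk2 : k ≤ 1
        · have hkeq : k = 1 := le_antisymm hk2 hk1
          rw [if_pos hk2]
          have ht2 := ih (as.eraseIdx j) (l+1) hEy
          rw [hkeq] at hkey hcoe ⊢
          norm_num at hkey
          have hone : (((1:ℕ):ℝ))⁻¹ = 1 := by norm_num
          rw [hone]
          calc 1 * theta t (as.eraseIdx j) l + (1 - 1) * theta t (as.eraseIdx j) (l+1)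
              = theta t (as.eraseIdx j) l := by ring
            _ ≤ Real.exp (lam * t) * pot lam l ↑(as.eraseIdx j) := ht1
            _ ≤ Real.exp (lam * t) * (Real.exp lam * pot lam (l+1) ((1:ℕ) ::ₘ ↑(as.eraseIdx j))) := by
                apply mul_le_mul_of_nonneg_left _ (Real.exp_pos _).le
                exact hkey
            _ = Real.exp (lam * ↑(t+1)) * pot lam (l+1) (↑as) := by
                rw [hexpt, hcoe]
                ring
        · rw [if_neg hk2]
          have hsy : ∀ y ∈ as.set j (k-1), 1 ≤ y := by
            intro y hyy
            rcases List.mem_or_eq_of_mem_set hyy with h' | h'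
            · exact hy y h'
            · omega
          have ht2 := ih (as.set j (k-1)) (l+1) hsy
          have hcoe2 : (↑(as.set j (k-1)) : Multiset ℕ) = (k-1) ::ₘ ↑(as.eraseIdx j) :=
            coe_set hj
          rw [hcoe2] at ht2
          calc ((k:ℝ))⁻¹ * theta t (as.eraseIdx j) l
                + (1 - ((k:ℝ))⁻¹) * theta t (as.set j (k-1)) (l+1)
              ≤ ((k:ℝ))⁻¹ * (Real.exp (lam * t) * pot lam l ↑(as.eraseIdx j))
                + (1 - ((k:ℝ))⁻¹) * (Real.exp (lam * t)
                    * pot lam (l+1) ((k-1) ::ₘ ↑(as.eraseIdx j))) := by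
                apply add_le_add
                · exact mul_le_mul_of_nonneg_left ht1 hinv0
                · exact mul_le_mul_of_nonneg_left ht2 hinv1
            _ = Real.exp (lam * t) * (((k:ℝ))⁻¹ * pot lam l ↑(as.eraseIdx j)
                + (1 - ((k:ℝ))⁻¹) * pot lam (l+1) ((k-1) ::ₘ ↑(as.eraseIdx j))) := by ring
            _ ≤ Real.exp (lam * t) * (Real.exp lam * pot lam (l+1) (k ::ₘ ↑(as.eraseIdx j))) :=
                mul_le_mul_of_nonneg_left hkey (Real.exp_pos _).le
            _ = Real.exp (lam * ↑(t+1)) * pot lam (l+1) (↑as) := by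
                rw [hexpt, hcoe]
                ring
      · rw [theta, dif_neg h]
        exact mul_nonneg (Real.exp_pos _).le (pot_nonneg _ _ _)

lemma pot_replicate (lam : ℝ) {n a l : ℕ} (hln : l ≤ n) :
    pot lam l ↑(List.replicate n a) = phi lam a ^ l := by
  have hsorted : (List.replicate n a).Pairwise (· ≤ ·) :=
    List.pairwise_replicate.mpr (Or.inr le_rfl)
  have hsort : (↑(List.replicate n a) : Multiset ℕ).sort (· ≤ ·) = List.replicate n a :=
    List.Perm.eq_of_pairwise' (Multiset.pairwise_sort _ _) hsorted
      (Multiset.coe_eq_coe.mp (Multiset.sort_eq _ _))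
  rw [pot, hsort, List.take_replicate, listpp, show l ⊓ n = l from min_eq_left hln,
    List.map_replicate, List.prod_replicate]

lemma phi_le_exp (lam : ℝ) (hlam : 0 ≤ lam) {a : ℕ} (ha : 1 ≤ a) :
    phi lam a ≤ Real.exp (-lam * ((a:ℝ) + 1) / 2 + lam ^ 2 * ((a:ℝ) - 1) ^ 2 / 8) := by
  have ha0 : (0:ℝ) < a := by exact_mod_cast ha
  set μ : ℝ := ((a:ℝ) + 1) / 2 with hμ
  have hrefl : Ssum lam a = ∑ u ∈ Finset.Icc 1 a, Real.exp (-lam * ((a:ℝ) + 1 - u)) := by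
    rw [Ssum]
    apply Finset.sum_nbij' (i := fun u => a + 1 - u) (j := fun u => a + 1 - u)
    · intro u hu
      rw [Finset.mem_Icc] at hu ⊢
      omega
    · intro u hu
      rw [Finset.mem_Icc] at hu ⊢
      omega
    · intro u hu
      rw [Finset.mem_Icc] at hu
      omega
    · intro u hu
      rw [Finset.mem_Icc] at hu
      omega
    · intro u hu
      rw [Finset.mem_Icc] at hu
      congr 1
      have hcast : ((a + 1 - u : ℕ) : ℝ) = (a:ℝ) + 1 - u := by
        have : u ≤ a + 1 := by omega
        push_cast [this]
        ring
      rw [hcast]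
      ring
  have hbound : ∀ u ∈ Finset.Icc 1 a,
      Real.exp (-lam * u) + Real.exp (-lam * ((a:ℝ) + 1 - u))
        ≤ 2 * (Real.exp (-lam * μ) * Real.exp (lam ^ 2 * ((a:ℝ) - 1) ^ 2 / 8)) := by
    intro u hu
    rw [Finset.mem_Icc] at hu
    have hu1 : (1:ℝ) ≤ u := by exact_mod_cast hu.1
    have hua : (u:ℝ) ≤ a := by exact_mod_cast hu.2
    have hid : Real.exp (-lam * u) + Real.exp (-lam * ((a:ℝ) + 1 - u))
        = 2 * (Real.exp (-lam * μ) * Real.cosh (lam * (μ - u))) := by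
      have e1 : Real.exp (-lam * u) = Real.exp (-lam * μ) * Real.exp (lam * (μ - u)) := by
        rw [← Real.exp_add]
        congr 1
        ring
      have e2 : Real.exp (-lam * ((a:ℝ) + 1 - u))
          = Real.exp (-lam * μ) * Real.exp (-(lam * (μ - u))) := by
        rw [← Real.exp_add]
        congr 1
        rw [hμ]
        ring
      rw [Real.cosh_eq, e1, e2]
      ring
    rw [hid]
    have hcosh1 : Real.cosh (lam * (μ - u)) ≤ Real.cosh (lam * (((a:ℝ) - 1) / 2)) := by
      rw [Real.cosh_le_cosh, abs_mul, abs_mul]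
      apply mul_le_mul_of_nonneg_left _ (abs_nonneg lam)
      rw [abs_le]
      constructor
      · rw [hμ]
        rw [abs_of_nonneg (by nlinarith : (0:ℝ) ≤ ((a:ℝ) - 1) / 2)]
        nlinarith
      · rw [hμ]
        rw [abs_of_nonneg (by nlinarith : (0:ℝ) ≤ ((a:ℝ) - 1) / 2)]
        nlinarith
    have hcosh2 : Real.cosh (lam * (((a:ℝ) - 1) / 2))
        ≤ Real.exp (lam ^ 2 * ((a:ℝ) - 1) ^ 2 / 8) := by
      have := Real.cosh_le_exp_half_sq (lam * (((a:ℝ) - 1) / 2))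
      have heq : (lam * (((a:ℝ) - 1) / 2)) ^ 2 / 2 = lam ^ 2 * ((a:ℝ) - 1) ^ 2 / 8 := by
        ring
      rwa [heq] at this
    have h3 := le_trans hcosh1 hcosh2
    nlinarith [Real.exp_pos (-lam * μ)]
  have hsum : 2 * Ssum lam a ≤ (a:ℝ) *
      (2 * (Real.exp (-lam * μ) * Real.exp (lam ^ 2 * ((a:ℝ) - 1) ^ 2 / 8))) := by
    have h1 : 2 * Ssum lam a
        = ∑ u ∈ Finset.Icc 1 a,
            (Real.exp (-lam * u) + Real.exp (-lam * ((a:ℝ) + 1 - u))) := by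
      rw [Finset.sum_add_distrib, ← hrefl, Ssum]
      ring
    rw [h1]
    have h2 := Finset.sum_le_sum hbound
    rw [Finset.sum_const, Nat.card_Icc, nsmul_eq_mul] at h2
    simpa using h2
  rw [phi, div_le_iff₀ ha0]
  have hfin : Real.exp (-lam * μ) * Real.exp (lam ^ 2 * ((a:ℝ) - 1) ^ 2 / 8)
      = Real.exp (-lam * ((a:ℝ) + 1) / 2 + lam ^ 2 * ((a:ℝ) - 1) ^ 2 / 8) := by
    rw [← Real.exp_add, hμ]
    congr 1
    ring
  rw [hfin] at hsum
  linarith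

theorem theta_replicate_lt_exp
    (a n ℓ : ℕ) (ha : 1 ≤ a) (hℓ1 : 1 ≤ ℓ) (hℓn : ℓ ≤ n)
    (α : ℝ) (hα : α < 1/2) (t : ℕ) (ht : (t : ℝ) < α * ℓ * a) :
    theta t (List.replicate n a) ℓ < Real.exp (-2 * (1/2 - α)^2 * ℓ) := by
  have ha0 : (0:ℝ) < a := by exact_mod_cast ha
  have hℓ0 : (0:ℝ) < ℓ := by exact_mod_cast hℓ1
  have ht0 : (0:ℝ) ≤ t := Nat.cast_nonneg t
  have hα0 : 0 < α := by
    by_contra hcon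
    push_neg at hcon
    nlinarith [mul_nonneg (mul_nonneg (neg_nonneg.mpr hcon) hℓ0.le) ha0.le]
  set β : ℝ := 1/2 - α with hβ
  have hβ0 : 0 < β := by rw [hβ]; linarith
  have hβ12 : β < 1/2 := by rw [hβ]; linarith
  obtain ⟨lam, hlam0, hkeyineq⟩ :
      ∃ lam : ℝ, 0 < lam ∧
        lam * (α * ℓ * a) + (ℓ:ℝ) * (-lam * ((a:ℝ)+1)/2 + lam^2*((a:ℝ)-1)^2/8)
          ≤ -2*β^2*ℓ := by
    rcases Nat.eq_or_lt_of_le ha with h1 | h2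
    · refine ⟨1, one_pos, ?_⟩
      rw [← h1]
      have hpos : (0:ℝ) ≤ 1/2 + β - 2*β^2 := by nlinarith
      have hβα : α = 1/2 - β := by rw [hβ]; ring
      rw [hβα]
      push_cast
      nlinarith [mul_nonneg hℓ0.le hpos]
    · have ha2 : (2:ℝ) ≤ a := by exact_mod_cast h2
      have hD : (0:ℝ) < ((a:ℝ)-1)^2 := by nlinarith
      refine ⟨(4*β*(a:ℝ) + 2)/(((a:ℝ)-1)^2), by positivity, ?_⟩
      set lam := (4*β*(a:ℝ) + 2)/(((a:ℝ)-1)^2) with hlam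
      have hlamD : lam * ((a:ℝ)-1)^2 = 4*β*(a:ℝ) + 2 := by
        rw [hlam]
        field_simp
        exact div_self (ne_of_gt (by linarith))
      have hlam0 : 0 < lam := by rw [hlam]; positivity
      have hexpr : lam * (α * ℓ * a) + (ℓ:ℝ) * (-lam * ((a:ℝ)+1)/2 + lam^2*((a:ℝ)-1)^2/8)
          = (ℓ:ℝ) * (-(lam * (β*(a:ℝ) + 1/2)) / 2) := by
        have hsq : lam^2*((a:ℝ)-1)^2 = lam * (4*β*(a:ℝ)+2) := by
          rw [show lam^2*((a:ℝ)-1)^2 = lam * (lam * ((a:ℝ)-1)^2) by ring, hlamD]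
        rw [hsq, hβ]
        ring
      rw [hexpr]
      have hmain : 4*β^2 ≤ lam * (β*(a:ℝ) + 1/2) := by
        rw [div_mul_eq_mul_div, le_div_iff₀ hD]
        nlinarith [hβ0, ha2, sq_nonneg (2*β*((a:ℝ)-1))]
      nlinarith [hℓ0, hmain]
  have hent : ∀ y ∈ List.replicate n a, 1 ≤ y := by
    intro y hy
    rw [List.eq_of_mem_replicate hy]
    exact ha
  have h1 := theta_le_pot lam hlam0.le t (List.replicate n a) ℓ hent
  rw [pot_replicate lam hℓn] at h1
  set X : ℝ := -lam * ((a:ℝ)+1)/2 + lam^2*((a:ℝ)-1)^2/8 with hX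
  have h2 : phi lam a ^ ℓ ≤ Real.exp X ^ ℓ :=
    pow_le_pow_left₀ (phi_nonneg _ _) (phi_le_exp lam hlam0.le ha) ℓ
  have h3 : theta t (List.replicate n a) ℓ ≤ Real.exp (lam * t + ℓ * X) := by
    calc theta t (List.replicate n a) ℓ ≤ Real.exp (lam * t) * phi lam a ^ ℓ := h1
      _ ≤ Real.exp (lam * t) * Real.exp X ^ ℓ := by
          apply mul_le_mul_of_nonneg_left h2 (Real.exp_pos _).le
      _ = Real.exp (lam * t) * Real.exp ((ℓ:ℝ) * X) := by rw [Real.exp_nat_mul]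
      _ = Real.exp (lam * t + ℓ * X) := by rw [← Real.exp_add]
  apply lt_of_le_of_lt h3
  rw [Real.exp_lt_exp]
  have h4 : lam * (t:ℝ) < lam * (α * ℓ * a) := by
    exact mul_lt_mul_of_pos_left ht hlam0
  have h5 : -2*β^2*(ℓ:ℝ) = -2*(1/2-α)^2*ℓ := by rw [hβ]
  linarith [hkeyineq]
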